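/- Let 𝕂 = ℝ or ℂ, suppose the smooth-manifold assumption holds, and let Y ∈ ℳ_k. Then for every Z ∈ 𝕂^{n×k}, the orthogonal projection of Z onto the real subspace T_Y (with respect to the inner product ⟨·,·⟩) equals Z − 𝒜*(G(Y)†𝒜(ZY*))·Y; equivalently, Z − 𝒜*(G(Y)†𝒜(ZY*))·Y lies in T_Y and 𝒜*(G(Y)†𝒜(ZY*))·Y is orthogonal to every element of T_Y. -/

import Mathlib

open scoped Matrix BigOperators ComplexOrder
open MeasureTheory ProbabilityTheory

noncomputable section

namespace SmoothedBM

variable {𝕂 : Type*} [RCLike 𝕂]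

/-- Real Frobenius inner product `⟨A,B⟩ = Re tr(Aᴴ B)`. -/
def finner {n k : ℕ} (A B : Matrix (Fin n) (Fin k) 𝕂) : ℝ :=
  RCLike.re (Matrix.trace (Aᴴ * B))

/-- Frobenius norm. -/
def fnorm {n k : ℕ} (A : Matrix (Fin n) (Fin k) 𝕂) : ℝ :=
  Real.sqrt (finner A A)

/-- Spectral (operator) norm: the largest singular value, i.e. the square root of the
largest eigenvalue of `Aᴴ * A`. -/
def opNorm {n k : ℕ} (A : Matrix (Fin n) (Fin k) 𝕂) : ℝ :=
  ⨆ i, Real.sqrt ((Matrix.isHermitian_conjTranspose_mul_self A).eigenvalues i)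

/-- The `k`-th (smallest) singular value of an `n × k` matrix: the square root of the
smallest eigenvalue of `Yᴴ * Y`.  (It is `0` when `k > n`.) -/
def sigmaLast {n k : ℕ} (Y : Matrix (Fin n) (Fin k) 𝕂) : ℝ :=
  Real.sqrt (⨅ i, (Matrix.isHermitian_conjTranspose_mul_self Y).eigenvalues i)

/-- Squared singular values of an `n × n` matrix, sorted in increasing order
(eigenvalues of `Aᴴ * A`, sorted). -/
def svSqAsc {n : ℕ} (A : Matrix (Fin n) (Fin n) 𝕂) : Fin n → ℝ := fun i =>
  (Matrix.isHermitian_conjTranspose_mul_self A).eigenvalues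
    (Tuple.sort ((Matrix.isHermitian_conjTranspose_mul_self A).eigenvalues) i)

/-- Sum of the squares of the `k` smallest singular values of an `n × n` matrix. -/
def sumSqSmallestSV {n : ℕ} (k : ℕ) (A : Matrix (Fin n) (Fin n) 𝕂) : ℝ :=
  ∑ i : Fin n, if (i : ℕ) < k then svSqAsc A i else 0

open Classical in
/-- Smallest eigenvalue of a self-adjoint matrix (junk value `0` if not self-adjoint). -/
def lambdaMin {n : ℕ} (A : Matrix (Fin n) (Fin n) 𝕂) : ℝ :=
  if hA : A.IsHermitian then ⨅ i, hA.eigenvalues i else 0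

open Classical in
/-- Number of eigenvalues of a self-adjoint matrix lying in a set `I ⊆ ℝ`
(junk value `0` if not self-adjoint). -/
def eigCountIn {n : ℕ} (A : Matrix (Fin n) (Fin n) 𝕂) (I : Set ℝ) : ℕ :=
  if hA : A.IsHermitian then (Finset.univ.filter fun i => hA.eigenvalues i ∈ I).card else 0

variable {n m k : ℕ}

/-- The constraint map `𝒜(Z)ᵢ = ⟨Aᵢ, Z⟩`. -/
def calA (A : Fin m → Matrix (Fin n) (Fin n) 𝕂) (Z : Matrix (Fin n) (Fin n) 𝕂) :
    Fin m → ℝ := fun i => finner (A i) Z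

/-- The adjoint map `𝒜*(μ) = ∑ᵢ μᵢ Aᵢ`. -/
def calAstar (A : Fin m → Matrix (Fin n) (Fin n) 𝕂) (μ : Fin m → ℝ) :
    Matrix (Fin n) (Fin n) 𝕂 := ∑ i, (μ i : 𝕂) • A i

/-- The SDP feasible set `𝒞`. -/
def SDPSet (A : Fin m → Matrix (Fin n) (Fin n) 𝕂) (b : Fin m → ℝ) :
    Set (Matrix (Fin n) (Fin n) 𝕂) :=
  {X | X.PosSemidef ∧ ∀ i, finner (A i) X = b i}

/-- The factorized feasible set `ℳ_k`. -/
def FactSet (A : Fin m → Matrix (Fin n) (Fin n) 𝕂) (b : Fin m → ℝ) (k : ℕ) :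
    Set (Matrix (Fin n) (Fin k) 𝕂) :=
  {Y | ∀ i, finner (A i) (Y * Yᴴ) = b i}

/-- The Gram matrix `G(Y)ᵢⱼ = ⟨AᵢY, AⱼY⟩`. -/
def gram (A : Fin m → Matrix (Fin n) (Fin n) 𝕂) (Y : Matrix (Fin n) (Fin k) 𝕂) :
    Matrix (Fin m) (Fin m) ℝ :=
  Matrix.of fun i j => finner (A i * Y) (A j * Y)

/-- The four Moore–Penrose identities. -/
def IsMoorePenrose {m : ℕ} (G H : Matrix (Fin m) (Fin m) ℝ) : Prop :=
  G * H * G = G ∧ H * G * H = H ∧ (G * H)ᵀ = G * H ∧ (H * G)ᵀ = H * G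

open Classical in
/-- The Moore–Penrose pseudo-inverse (the unique matrix satisfying the four
Moore–Penrose identities; junk value `0` if none exists). -/
def pinv {m : ℕ} (G : Matrix (Fin m) (Fin m) ℝ) : Matrix (Fin m) (Fin m) ℝ :=
  if h : ∃ H, IsMoorePenrose G H then h.choose else 0

/-- The matrix `S(Y) = C − 𝒜*(G(Y)† 𝒜(C Y Yᴴ))`. -/
def Smat (A : Fin m → Matrix (Fin n) (Fin n) 𝕂) (C : Matrix (Fin n) (Fin n) 𝕂)
    (Y : Matrix (Fin n) (Fin k) 𝕂) : Matrix (Fin n) (Fin n) 𝕂 :=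
  C - calAstar A (pinv (gram A Y) *ᵥ calA A (C * (Y * Yᴴ)))

/-- `Y` is an `εg`-approximate first-order stationary point of the factorized problem. -/
def IsFOSP (A : Fin m → Matrix (Fin n) (Fin n) 𝕂) (b : Fin m → ℝ)
    (C : Matrix (Fin n) (Fin n) 𝕂) (Y : Matrix (Fin n) (Fin k) 𝕂) (εg : ℝ) : Prop :=
  Y ∈ FactSet A b k ∧ fnorm ((2 : 𝕂) • (Smat A C Y * Y)) ≤ εg

/-- `Y` is an `(εg, εH)`-approximate second-order stationary point of the factorized problem. -/
def IsSOSP (A : Fin m → Matrix (Fin n) (Fin n) 𝕂) (b : Fin m → ℝ)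
    (C : Matrix (Fin n) (Fin n) 𝕂) (Y : Matrix (Fin n) (Fin k) 𝕂) (εg εH : ℝ) : Prop :=
  IsFOSP A b C Y εg ∧
    ∀ V : Matrix (Fin n) (Fin k) 𝕂, (∀ i, finner (A i * Y) V = 0) →
      -εH * (fnorm V) ^ 2 ≤ finner V (Smat A C Y * V)

/-- The smooth-manifold assumption (Assumption 1). -/
def SmoothAssumption (A : Fin m → Matrix (Fin n) (Fin n) 𝕂) (b : Fin m → ℝ) : Prop :=
  ∀ k' : ℕ, k' ≤ n → (FactSet A b k').Nonempty →
    (∀ Y ∈ FactSet A b k', LinearIndependent ℝ fun i => A i * Y) ∨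
    (∃ U : Set (Matrix (Fin n) (Fin k') 𝕂), IsOpen U ∧ FactSet A b k' ⊆ U ∧
      ∃ d : ℕ, ∀ Y ∈ U,
        Module.finrank ℝ (Submodule.span ℝ (Set.range fun i => A i * Y)) = d)

/-- A real Gaussian Wigner matrix with variance `σ²`: a random real symmetric matrix whose
on-and-above-diagonal entries are independent centered Gaussians `N(0, σ²)`. -/
structure IsRealWigner {Ω : Type*} [MeasurableSpace Ω] (μ : Measure Ω) {n : ℕ} (σ : ℝ)
    (W : Ω → Matrix (Fin n) (Fin n) ℝ) : Prop where
  symm : ∀ ω, (W ω)ᵀ = W ω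
  meas : ∀ i j, Measurable fun ω => W ω i j
  indep : iIndepFun
    (fun (p : {p : Fin n × Fin n // p.1 ≤ p.2}) ω => W ω p.val.1 p.val.2) μ
  gauss : ∀ i j : Fin n, i ≤ j →
    Measure.map (fun ω => W ω i j) μ = gaussianReal 0 ⟨σ ^ 2, sq_nonneg σ⟩

/-- The independent real coordinates of a complex Hermitian random matrix:
diagonal entries, and real/imaginary parts of the above-diagonal entries. -/
def wignerParts {Ω : Type*} {n : ℕ} (W : Ω → Matrix (Fin n) (Fin n) ℂ) :
    (Fin n ⊕ {p : Fin n × Fin n // p.1 < p.2} × Bool) → Ω → ℝ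
  | Sum.inl i => fun ω => (W ω i i).re
  | Sum.inr (p, false) => fun ω => (W ω p.val.1 p.val.2).re
  | Sum.inr (p, true) => fun ω => (W ω p.val.1 p.val.2).im

/-- A complex Gaussian Wigner matrix with variance `σ²`: a random Hermitian matrix whose
on-and-above-diagonal entries are independent, the diagonal entries being real `N(0, σ²)` and
the above-diagonal entries having independent `N(0, σ²/2)` real and imaginary parts. -/
structure IsComplexWigner {Ω : Type*} [MeasurableSpace Ω] (μ : Measure Ω) {n : ℕ} (σ : ℝ)
    (W : Ω → Matrix (Fin n) (Fin n) ℂ) : Prop where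
  herm : ∀ ω, (W ω).IsHermitian
  meas : ∀ i j, Measurable fun ω => W ω i j
  indep : iIndepFun
    (wignerParts W) μ
  diag : ∀ i : Fin n,
    Measure.map (fun ω => (W ω i i).re) μ = gaussianReal 0 ⟨σ ^ 2, sq_nonneg σ⟩
  off_re : ∀ i j : Fin n, i < j →
    Measure.map (fun ω => (W ω i j).re) μ = gaussianReal 0 ⟨σ ^ 2 / 2, by positivity⟩
  off_im : ∀ i j : Fin n, i < j →
    Measure.map (fun ω => (W ω i j).im) μ = gaussianReal 0 ⟨σ ^ 2 / 2, by positivity⟩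



/-! ### Auxiliary lemmas for the projection formula -/

lemma finner_comm' {n k : ℕ} (A B : Matrix (Fin n) (Fin k) 𝕂) : finner A B = finner B A := by
  have h : Bᴴ * A = (Aᴴ * B)ᴴ := by
    rw [Matrix.conjTranspose_mul, Matrix.conjTranspose_conjTranspose]
  rw [finner, finner, h, Matrix.trace_conjTranspose]
  simp [RCLike.star_def]

lemma finner_sub_right' {n k : ℕ} (A B C : Matrix (Fin n) (Fin k) 𝕂) :
    finner A (B - C) = finner A B - finner A C := by
  simp [finner, Matrix.mul_sub, Matrix.trace_sub, map_sub]

lemma finner_smul_right' {n k : ℕ} (A B : Matrix (Fin n) (Fin k) 𝕂) (r : ℝ) :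
    finner A ((r : 𝕂) • B) = r * finner A B := by
  rw [finner, Matrix.mul_smul, Matrix.trace_smul, smul_eq_mul, RCLike.re_ofReal_mul, finner]

lemma finner_sum_right' {n k : ℕ} {ι : Type*} (s : Finset ι) (A : Matrix (Fin n) (Fin k) 𝕂)
    (f : ι → Matrix (Fin n) (Fin k) 𝕂) :
    finner A (∑ j ∈ s, f j) = ∑ j ∈ s, finner A (f j) := by
  simp [finner, Matrix.mul_sum, Matrix.trace_sum, map_sum]

lemma finner_zero_right' {n k : ℕ} (A : Matrix (Fin n) (Fin k) 𝕂) :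
    finner A (0 : Matrix (Fin n) (Fin k) 𝕂) = 0 := by
  simp [finner]

lemma finner_self_eq' {n k : ℕ} (A : Matrix (Fin n) (Fin k) 𝕂) :
    finner A A = ∑ j, ∑ i, ‖A i j‖ ^ 2 := by
  simp only [finner, Matrix.trace]
  simp only [Matrix.diag_apply, Matrix.mul_apply, Matrix.conjTranspose_apply, map_sum]
  congr 1; ext j; congr 1; ext i
  rw [RCLike.star_def, RCLike.conj_mul, ← RCLike.ofReal_pow, RCLike.ofReal_re]

lemma eq_zero_of_finner_self' {n k : ℕ} (A : Matrix (Fin n) (Fin k) 𝕂)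
    (h : finner A A = 0) : A = 0 := by
  rw [finner_self_eq'] at h
  have h2 : ∀ j ∈ Finset.univ, ∑ i, ‖A i j‖ ^ 2 = (0 : ℝ) := by
    rw [← Finset.sum_eq_zero_iff_of_nonneg]
    · exact h
    · intro j _; positivity
  ext i j
  have h3 := (Finset.sum_eq_zero_iff_of_nonneg (by intro i _; positivity)).mp
    (h2 j (Finset.mem_univ j)) i (Finset.mem_univ i)
  have : ‖A i j‖ = 0 := by nlinarith [norm_nonneg (A i j)]
  simpa using this

lemma exists_moorePenrose' {m : ℕ} (G : Matrix (Fin m) (Fin m) ℝ) (hG : G.IsHermitian) :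
    ∃ H, IsMoorePenrose G H := by
  set U : Matrix (Fin m) (Fin m) ℝ := ↑(hG.eigenvectorUnitary) with hU
  set d : Fin m → ℝ := hG.eigenvalues with hd
  have hUU : star U * U = 1 := (Matrix.mem_unitaryGroup_iff').mp (hG.eigenvectorUnitary).2
  have hco : (RCLike.ofReal ∘ d : Fin m → ℝ) = d := by
    funext i; simp [Function.comp, RCLike.ofReal_real_eq_id]
  have hspec : G = U * Matrix.diagonal d * star U := by
    have h := hG.spectral_theorem
    rw [hco] at h
    exact h
  have hmul : ∀ a b : Fin m → ℝ,
      (U * Matrix.diagonal a * star U) * (U * Matrix.diagonal b * star U)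
        = U * Matrix.diagonal (fun i => a i * b i) * star U := by
    intro a b
    calc (U * Matrix.diagonal a * star U) * (U * Matrix.diagonal b * star U)
        = U * Matrix.diagonal a * (star U * U) * Matrix.diagonal b * star U := by
          simp only [Matrix.mul_assoc]
      _ = U * (Matrix.diagonal a * Matrix.diagonal b) * star U := by
          rw [hUU]; simp only [Matrix.mul_one, Matrix.mul_assoc]
      _ = U * Matrix.diagonal (fun i => a i * b i) * star U := by
          rw [Matrix.diagonal_mul_diagonal]
  have key : ∀ f f' : Fin m → ℝ, (∀ i, f i = f' i) →
      U * Matrix.diagonal f * star U = U * Matrix.diagonal f' * star U := by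
    intro f f' hf
    rw [funext hf]
  have hsymm : ∀ a : Fin m → ℝ, (U * Matrix.diagonal a * star U)ᵀ
      = U * Matrix.diagonal a * star U := by
    intro a
    rw [← Matrix.conjTranspose_eq_transpose_of_trivial, Matrix.conjTranspose_mul,
      Matrix.conjTranspose_mul, Matrix.diagonal_conjTranspose, Matrix.star_eq_conjTranspose U,
      Matrix.conjTranspose_conjTranspose]
    simp [Matrix.mul_assoc, Matrix.star_eq_conjTranspose]
  set g : Fin m → ℝ := fun i => if d i = 0 then 0 else (d i)⁻¹ with hg
  refine ⟨U * Matrix.diagonal g * star U, ?_, ?_, ?_, ?_⟩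
  · rw [hspec, hmul, hmul]
    refine key _ _ fun i => ?_
    by_cases h : d i = 0 <;> simp [hg, h]
  · rw [hspec, hmul, hmul]
    refine key _ _ fun i => ?_
    by_cases h : d i = 0 <;> simp [hg, h]
  · rw [hspec, hmul]; exact hsymm _
  · rw [hspec, hmul]; exact hsymm _

lemma gram_isHermitian' (A : Fin m → Matrix (Fin n) (Fin n) 𝕂) (Y : Matrix (Fin n) (Fin k) 𝕂) :
    (gram A Y).IsHermitian := by
  ext i j
  simp only [Matrix.conjTranspose_apply, gram, Matrix.of_apply, star_trivial]
  exact finner_comm' _ _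

lemma pinv_isMoorePenrose' {m : ℕ} (G : Matrix (Fin m) (Fin m) ℝ) (hG : G.IsHermitian) :
    IsMoorePenrose G (pinv G) := by
  classical
  have h := exists_moorePenrose' G hG
  rw [pinv, dif_pos h]
  exact h.choose_spec

lemma calA_mul_eq' (A : Fin m → Matrix (Fin n) (Fin n) 𝕂) (Y : Matrix (Fin n) (Fin k) 𝕂)
    (Z : Matrix (Fin n) (Fin k) 𝕂) (i : Fin m) :
    calA A (Z * Yᴴ) i = finner (A i * Y) Z := by
  unfold calA finner
  congr 1
  rw [Matrix.conjTranspose_mul, ← Matrix.mul_assoc, Matrix.trace_mul_comm, ← Matrix.mul_assoc]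

lemma calAstar_mul' (A : Fin m → Matrix (Fin n) (Fin n) 𝕂) (μ : Fin m → ℝ)
    (Y : Matrix (Fin n) (Fin k) 𝕂) :
    calAstar A μ * Y = ∑ j, (μ j : 𝕂) • (A j * Y) := by
  unfold calAstar
  rw [Matrix.sum_mul]
  simp [Matrix.smul_mul]

lemma finner_calAstar' (A : Fin m → Matrix (Fin n) (Fin n) 𝕂) (Y : Matrix (Fin n) (Fin k) 𝕂)
    (μ : Fin m → ℝ) (i : Fin m) :
    finner (A i * Y) (calAstar A μ * Y) = (gram A Y *ᵥ μ) i := by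
  rw [calAstar_mul', finner_sum_right']
  simp only [finner_smul_right']
  simp [Matrix.mulVec, dotProduct, gram, mul_comm]

/-- Lemma 1, projection formula: `Z − 𝒜*(G(Y)†𝒜(ZY*))Y` lies in the
tangent space `T_Y` and `𝒜*(G(Y)†𝒜(ZY*))Y` is orthogonal to every element of `T_Y`. -/
theorem orthogonal_projection_formula
    {𝕂 : Type*} [RCLike 𝕂] {n m k : ℕ} (hn : 0 < n) (hm : 0 < m) (hk : 0 < k)
    (A : Fin m → Matrix (Fin n) (Fin n) 𝕂) (hA : ∀ i, (A i).IsHermitian)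
    (b : Fin m → ℝ) (hsm : SmoothAssumption A b)
    (Y : Matrix (Fin n) (Fin k) 𝕂) (hY : Y ∈ FactSet A b k)
    (Z : Matrix (Fin n) (Fin k) 𝕂) :
    (∀ i, finner (A i * Y)
        (Z - calAstar A (pinv (gram A Y) *ᵥ calA A (Z * Yᴴ)) * Y) = 0) ∧
    (∀ V : Matrix (Fin n) (Fin k) 𝕂, (∀ i, finner (A i * Y) V = 0) →
        finner (calAstar A (pinv (gram A Y) *ᵥ calA A (Z * Yᴴ)) * Y) V = 0) := by
  classical
  have hGH := gram_isHermitian' A Y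
  obtain ⟨h₁, h₂, h₃, h₄⟩ := pinv_isMoorePenrose' (gram A Y) hGH
  set G : Matrix (Fin m) (Fin m) ℝ := gram A Y with hGdef
  set H : Matrix (Fin m) (Fin m) ℝ := pinv G with hHdef
  set v : Fin m → ℝ := fun i => finner (A i * Y) Z with hvdef
  have hcalA : calA A (Z * Yᴴ) = v := funext fun i => calA_mul_eq' A Y Z i
  have hGsym : Gᵀ = G := by
    have h := hGH
    rwa [Matrix.IsHermitian, Matrix.conjTranspose_eq_transpose_of_trivial] at h
  have hGGH : G * (G * H) = G := by
    have h := congrArg Matrix.transpose h₁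
    rwa [Matrix.transpose_mul, h₃, hGsym] at h
  set w : Fin m → ℝ := v - G *ᵥ (H *ᵥ v) with hwdef
  have hGw : G *ᵥ w = 0 := by
    rw [hwdef, Matrix.mulVec_sub, Matrix.mulVec_mulVec, Matrix.mulVec_mulVec,
      Matrix.mul_assoc, hGGH, sub_self]
  have hw_eq : ∀ i, finner (A i * Y) (Z - calAstar A (H *ᵥ v) * Y) = w i := by
    intro i
    rw [finner_sub_right', finner_calAstar']
    rw [show gram A Y *ᵥ (H *ᵥ v) = G *ᵥ (H *ᵥ v) from rfl]
    rw [hwdef]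
    simp [hvdef]
  set S : Matrix (Fin n) (Fin k) 𝕂 := ∑ j, ((w j : ℝ) : 𝕂) • (A j * Y) with hSdef
  have hSfin : ∀ X : Matrix (Fin n) (Fin k) 𝕂,
      finner X S = ∑ j, w j * finner X (A j * Y) := by
    intro X
    rw [hSdef, finner_sum_right']
    exact Finset.sum_congr rfl fun j _ => finner_smul_right' _ _ _
  have hSS : finner S S = 0 := by
    rw [hSfin]
    have hterm : ∀ j, finner S (A j * Y) = (G *ᵥ w) j := by
      intro j
      rw [finner_comm', hSfin]
      simp [Matrix.mulVec, dotProduct, hGdef, gram, mul_comm]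
    calc ∑ j, w j * finner S (A j * Y) = ∑ j, w j * (G *ᵥ w) j := by
          exact Finset.sum_congr rfl fun j _ => by rw [hterm]
      _ = 0 := by rw [hGw]; simp
  have hS0 : S = 0 := eq_zero_of_finner_self' _ hSS
  have hsum : ∑ i, w i * w i = 0 := by
    calc ∑ i, w i * w i
        = ∑ i, w i * finner (A i * Y) (Z - calAstar A (H *ᵥ v) * Y) := by
          exact Finset.sum_congr rfl fun i _ => by rw [hw_eq]
      _ = ∑ i, w i * finner (Z - calAstar A (H *ᵥ v) * Y) (A i * Y) := by
          exact Finset.sum_congr rfl fun i _ => by rw [finner_comm']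
      _ = finner (Z - calAstar A (H *ᵥ v) * Y) S := (hSfin _).symm
      _ = 0 := by rw [hS0]; exact finner_zero_right' _
  have hw0 : ∀ i, w i = 0 := by
    intro i
    have hnn : ∀ j ∈ Finset.univ, (0 : ℝ) ≤ w j * w j := fun j _ => mul_self_nonneg _
    exact mul_self_eq_zero.mp
      ((Finset.sum_eq_zero_iff_of_nonneg hnn).mp hsum i (Finset.mem_univ i))
  constructor
  · intro i
    rw [hcalA]
    rw [hw_eq]
    exact hw0 i
  · intro V hV
    rw [hcalA, finner_comm', calAstar_mul', finner_sum_right']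
    refine Finset.sum_eq_zero fun j _ => ?_
    rw [finner_smul_right', finner_comm', hV j, mul_zero]


end SmoothedBM
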